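/- For projective measurements, the OQ–TPM difference maximized over the final projective measurement recovers the trace-norm distance to the dephased state: max over projective measurements {B_f} of Σ_{i,f} |q^OQ_{if} − p^TPM_{if}| equals ‖ρ − ρ_D‖_tr, where ρ_D = Σ_i A_i ρ A_i. In particular, for any fixed {B_f}, Σ_{i,f} |q^OQ_{if} − p^TPM_{if}| = Σ_f |Tr((ρ − ρ_D) B_f)| ≤ ‖ρ − ρ_D‖_tr, with equality achieved by the eigenbasis of ρ − ρ_D. -/

import Mathlib

open Matrix ComplexOrder

/-- For projective measurements, the OQ–TPM difference summed in
absolute value equals `∑_f |Tr((ρ−ρ_D)B_f)| ≤ ‖ρ − ρ_D‖_tr`, and the trace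
norm is attained by maximizing over the final projective measurement. -/
theorem oq_tpm_difference_trace_norm (d : ℕ) (hd : 0 < d)
    (ρ : Matrix (Fin d) (Fin d) ℂ) (hρ : ρ.PosSemidef) (hρtr : ρ.trace = 1)
    (A : Fin d → Matrix (Fin d) (Fin d) ℂ)
    (hAherm : ∀ i, (A i).IsHermitian) (hAproj : ∀ i, A i * A i = A i)
    (hAsum : ∑ i, A i = 1) (hArank : ∀ i, (A i).rank = 1)
    (ρD : Matrix (Fin d) (Fin d) ℂ) (hρD : ρD = ∑ i, A i * ρ * A i)
    (hherm : (ρ - ρD).IsHermitian)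
    (trNorm : ℝ) (htrNorm : trNorm = ∑ j, |hherm.eigenvalues j|) :
    (∀ B : Fin d → Matrix (Fin d) (Fin d) ℂ,
      (∀ f, (B f).IsHermitian) → (∀ f, B f * B f = B f) → (∑ f, B f = 1) →
      (∑ i, ∑ f, norm
          (((A i * ρ * A i * B f).trace +
              (1 / (d : ℂ)) * ((ρ * B f).trace -
                ∑ i', (A i' * ρ * A i' * B f).trace)) -
            (A i * ρ * A i * B f).trace) =
        ∑ f, norm (((ρ - ρD) * B f).trace)) ∧
      (∑ f, norm (((ρ - ρD) * B f).trace)) ≤ trNorm) ∧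
    (∃ B : Fin d → Matrix (Fin d) (Fin d) ℂ,
      (∀ f, (B f).IsHermitian) ∧ (∀ f, B f * B f = B f) ∧ (∑ f, B f = 1) ∧
      (∑ f, norm (((ρ - ρD) * B f).trace)) = trNorm) := by
  have hdR : (d : ℝ) ≠ 0 := Nat.cast_ne_zero.mpr hd.ne'
  set U : Matrix (Fin d) (Fin d) ℂ := (hherm.eigenvectorUnitary : Matrix (Fin d) (Fin d) ℂ)
    with hUdef
  have hUmem := hherm.eigenvectorUnitary.2
  have hsUU : star U * U = 1 := Matrix.mem_unitaryGroup_iff'.mp hUmem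
  have hUsU : U * star U = 1 := Matrix.mem_unitaryGroup_iff.mp hUmem
  -- trace formula
  have key : ∀ B : Matrix (Fin d) (Fin d) ℂ,
      ((ρ - ρD) * B).trace = ∑ j, (hherm.eigenvalues j : ℂ) * ((star U * B * U) j j) := by
    intro B
    conv_lhs => rw [hherm.spectral_theorem, Unitary.conjStarAlgAut_apply, ← hUdef]
    rw [mul_assoc, mul_assoc, Matrix.trace_mul_comm U, mul_assoc, mul_assoc, ← mul_assoc (star U)]
    show (Matrix.diagonal _ * (star U * B * U)).trace = _
    simp [Matrix.trace, Matrix.diag, Matrix.mul_apply, Matrix.diagonal_apply, ite_mul,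
      Finset.sum_ite_eq, Function.comp]
  -- nonneg real diagonal entries
  have hdiag : ∀ B : Matrix (Fin d) (Fin d) ℂ, B.IsHermitian → B * B = B → ∀ j,
      0 ≤ ((star U * B * U) j j).re ∧
        (star U * B * U) j j = (((star U * B * U) j j).re : ℂ) := by
    intro B hB hBB j
    have hpsd : B.PosSemidef := by
      nth_rewrite 1 [← hBB]
      nth_rewrite 1 [← hB.eq]
      exact Matrix.posSemidef_conjTranspose_mul_self B
    have hpsd2 : (star U * B * U).PosSemidef := by
      have := hpsd.conjTranspose_mul_mul_same U
      simpa [Matrix.star_eq_conjTranspose] using this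
    have h1 : (0 : ℂ) ≤ (star U * B * U) j j := by
      exact hpsd2.diag_nonneg
    rw [Complex.le_def] at h1
    constructor
    · exact h1.1
    · exact (Complex.ext rfl h1.2.symm)
  constructor
  · intro B hB1 hB2 hB3
    have hc : ∀ f, ((ρ * B f).trace - ∑ i', (A i' * ρ * A i' * B f).trace)
        = ((ρ - ρD) * B f).trace := by
      intro f
      rw [Matrix.sub_mul, Matrix.trace_sub, hρD, Finset.sum_mul, Matrix.trace_sum]
    constructor
    · simp only [add_sub_cancel_left, hc, _root_.map_mul, Finset.sum_const, Finset.card_fin,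
        nsmul_eq_mul, norm_mul]
      have habs : ‖(1 / (d : ℂ))‖ = 1 / (d : ℝ) := by
        simp [map_div₀]
      rw [habs, ← Finset.mul_sum, ← mul_assoc, mul_one_div, div_self hdR, one_mul]
    · -- the bound
      set r : Fin d → Fin d → ℝ := fun f j => ((star U * B f * U) j j).re with hr
      have hre : ∀ f j, 0 ≤ r f j := fun f j => (hdiag (B f) (hB1 f) (hB2 f) j).1
      have heq : ∀ f j, (star U * B f * U) j j = ((r f j : ℝ) : ℂ) :=
        fun f j => (hdiag (B f) (hB1 f) (hB2 f) j).2
      have hsum1 : ∀ j, ∑ f, r f j = 1 := by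
        intro j
        have h2 : ∑ f, (star U * B f * U) j j = 1 := by
          have : ∑ f, star U * B f * U = star U * (∑ f, B f) * U := by
            rw [Finset.mul_sum, Finset.sum_mul]
          calc ∑ f, (star U * B f * U) j j = (∑ f, star U * B f * U) j j := by
                rw [Matrix.sum_apply]
            _ = 1 := by rw [this, hB3, mul_one, hsUU, Matrix.one_apply_eq]
        have := congrArg Complex.re h2
        simpa [Complex.re_sum, hr] using this
      calc ∑ f, ‖(((ρ - ρD) * B f).trace)‖
          = ∑ f, |∑ j, hherm.eigenvalues j * r f j| := by
            refine Finset.sum_congr rfl fun f _ => ?_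
            rw [key (B f)]
            have : ∑ j, (hherm.eigenvalues j : ℂ) * ((star U * B f * U) j j)
                = ((∑ j, hherm.eigenvalues j * r f j : ℝ) : ℂ) := by
              push_cast
              exact Finset.sum_congr rfl fun j _ => by rw [heq f j]
            rw [this, Complex.norm_real, Real.norm_eq_abs]
        _ ≤ ∑ f, ∑ j, |hherm.eigenvalues j| * r f j := by
            refine Finset.sum_le_sum fun f _ => ?_
            refine (Finset.abs_sum_le_sum_abs _ _).trans ?_
            refine Finset.sum_le_sum fun j _ => ?_
            rw [abs_mul, abs_of_nonneg (hre f j)]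
        _ = ∑ j, |hherm.eigenvalues j| * ∑ f, r f j := by
            rw [Finset.sum_comm]
            exact Finset.sum_congr rfl fun j _ => by rw [Finset.mul_sum]
        _ = trNorm := by
            simp [hsum1, htrNorm]
  · -- existence
    set E : Fin d → Matrix (Fin d) (Fin d) ℂ :=
      fun f => Matrix.diagonal (fun j => if j = f then (1 : ℂ) else 0) with hE
    have hEH : ∀ f, (E f).IsHermitian := by
      intro f
      rw [Matrix.IsHermitian, hE]
      dsimp only
      rw [Matrix.diagonal_conjTranspose]
      exact congrArg Matrix.diagonal (funext fun j => by
        by_cases h : j = f <;> simp [h, Pi.star_apply])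
    have hEE : ∀ f, E f * E f = E f := by
      intro f
      rw [hE]
      dsimp only
      rw [Matrix.diagonal_mul_diagonal]
      exact congrArg Matrix.diagonal (funext fun j => by by_cases h : j = f <;> simp [h])
    have hEstar : ∀ f, star (E f) = E f := by
      intro f
      rw [Matrix.star_eq_conjTranspose]
      exact (hEH f).eq
    have hEsum : ∑ f, E f = 1 := by
      ext i j
      by_cases h : i = j <;>
        simp [hE, Matrix.sum_apply, Matrix.diagonal_apply, Matrix.one_apply, h,
          Finset.sum_ite_eq]
    refine ⟨fun f => U * E f * star U, ?_, ?_, ?_, ?_⟩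
    · intro f
      dsimp only
      rw [Matrix.IsHermitian, ← Matrix.star_eq_conjTranspose, StarMul.star_mul, StarMul.star_mul, star_star,
        hEstar, ← mul_assoc]
    · intro f
      dsimp only
      have h1 : U * E f * star U * (U * E f * star U)
          = U * E f * (star U * U) * (E f * star U) := by noncomm_ring
      rw [h1, hsUU, mul_one, ← mul_assoc, mul_assoc U, hEE]
    · dsimp only
      rw [← Finset.sum_mul, ← Finset.mul_sum, hEsum, mul_one, hUsU]
    · dsimp only
      have htr : ∀ f, ((ρ - ρD) * (U * E f * star U)).trace = ((hherm.eigenvalues f : ℝ) : ℂ) := by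
        intro f
        rw [key]
        have hmid : star U * (U * E f * star U) * U = E f := by
          rw [← mul_assoc, ← mul_assoc, hsUU, one_mul, mul_assoc, hsUU, mul_one]
        rw [hmid]
        simp [hE, Matrix.diagonal_apply, mul_ite, Finset.sum_ite_eq']
      rw [htrNorm]
      exact Finset.sum_congr rfl fun f _ => by rw [htr f, Complex.norm_real, Real.norm_eq_abs]
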